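/- arXiv:2605.03218 — 2 statements merged into one kernel-verified Lean document; each statement's English description precedes it below -/
import Mathlib

section
/- Let n ≥ 1 and let E ⊆ V be an error pattern in the subdivided complete bipartite graph K_{n,n}. Then there exists a type-preserving automorphism ψ mapping E onto the complementary pattern V ∖ E if and only if |E| = n. -/
/-!
The subdivided complete bipartite graph `K_{m,n}`: variable nodes
`V = A ⊔ B` with `A = Fin m`, `B = Fin n`; check nodes `C = A × B`;
and, for each `(a, b) ∈ A × B`, an edge between variable `a ∈ A` and the
check `(a, b)`, and an edge between variable `b ∈ B` and the check `(a, b)`.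
-/

/-- Variable nodes of the subdivided `K_{m,n}`. -/
abbrev Var (m n : ℕ) := Fin m ⊕ Fin n

/-- Check nodes of the subdivided `K_{m,n}`. -/
abbrev Check (m n : ℕ) := Fin m × Fin n

/-- Adjacency between a variable node and a check node in the subdivided `K_{m,n}`:
the check `(a, b)` is adjacent exactly to the variable `a ∈ A` and the variable `b ∈ B`. -/
def Adj (m n : ℕ) (u : Var m n) (c : Check m n) : Prop :=
  u = Sum.inl c.1 ∨ u = Sum.inr c.2

/-- The side `A ⊆ V` of the variable nodes. -/
def sideA (m n : ℕ) : Set (Var m n) := Set.range Sum.inl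

/-- The side `B ⊆ V` of the variable nodes. -/
def sideB (m n : ℕ) : Set (Var m n) := Set.range Sum.inr

/-- A type-preserving automorphism of the subdivided `K_{m,n}`: a bijection of
`V ⊔ C` mapping `V` onto `V` and `C` onto `C` (hence a pair of bijections of `V`
and of `C`) that preserves adjacency. -/
structure Aut (m n : ℕ) where
  varMap : Var m n ≃ Var m n
  checkMap : Check m n ≃ Check m n
  adj_iff : ∀ u c, Adj m n (varMap u) (checkMap c) ↔ Adj m n u c

/-- Syndrome label induced by an error pattern `E ⊆ V` at a check `c = (a,b)`:
the label is `1` iff exactly one of the two variable neighbors of `c` lies in `E`. -/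
def synd (m n : ℕ) (E : Set (Var m n)) (c : Check m n) : Prop :=
  Xor' (Sum.inl c.1 ∈ E) (Sum.inr c.2 ∈ E)

/-- The monomial edge labeling on the subdivided `K_{m,n}`: the edge between the
variable `a ∈ A` and the check `(a,b)` is labeled `Sum.inl a`, and the edge between
the variable `b ∈ B` and the check `(a,b)` is labeled `Sum.inr b`; i.e. the label of
an edge `(u, c)` is the variable endpoint `u`, viewed in `Fin m ⊕ Fin n`. -/
def edgeLabel (m n : ℕ) (u : Var m n) (_c : Check m n) : Fin m ⊕ Fin n := u


lemma exists_perm_image {α : Type*} [Fintype α] [DecidableEq α] (s t : Set α)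
    (h : s.ncard = t.ncard) : ∃ e : α ≃ α, e '' s = t := by
  classical
  have hcard : Fintype.card s = Fintype.card t := by
    simpa [Set.ncard_eq_toFinset_card', Set.toFinset_card] using h
  have hcomp : Fintype.card ↥sᶜ = Fintype.card ↥tᶜ := by
    rw [Fintype.card_compl_set, Fintype.card_compl_set, hcard]
  let e1 : s ≃ t := Fintype.equivOfCardEq hcard
  let e2 : ↥sᶜ ≃ ↥tᶜ := Fintype.equivOfCardEq hcomp
  let e : α ≃ α := (Equiv.Set.sumCompl s).symm.trans ((e1.sumCongr e2).trans (Equiv.Set.sumCompl t))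
  refine ⟨e, ?_⟩
  apply Set.eq_of_subset_of_ncard_le
  · rintro y ⟨x, hx, rfl⟩
    have : (Equiv.Set.sumCompl s).symm x = Sum.inl ⟨x, hx⟩ :=
      Equiv.Set.sumCompl_symm_apply_of_mem hx
    simp only [e, Equiv.trans_apply, this, Equiv.sumCongr_apply, Sum.map_inl,
      Equiv.Set.sumCompl_apply_inl]
    exact (e1 ⟨x, hx⟩).2
  · rw [Set.ncard_image_of_injective _ e.injective, h]
  · exact Set.toFinite _


/-- The side-swapping automorphism of the subdivided `K_{n,n}`. -/
def swapAut (n : ℕ) (σ τ : Fin n ≃ Fin n) : Aut n n where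
  varMap := (Equiv.sumComm (Fin n) (Fin n)).trans (Equiv.sumCongr σ τ)
  checkMap := (Equiv.prodComm (Fin n) (Fin n)).trans (Equiv.prodCongr σ τ)
  adj_iff := by
    rintro (a | b) ⟨a', b'⟩ <;>
      simp [Adj, τ.injective.eq_iff, σ.injective.eq_iff]

/-- For `n ≥ 1`, there is a type-preserving automorphism of the subdivided
`K_{n,n}` mapping `E` onto the complementary pattern `V ∖ E` iff `|E| = n`. -/
theorem stmt11 (n : ℕ) (hn : 1 ≤ n) (E : Set (Var n n)) :
    (∃ ψ : Aut n n, ψ.varMap '' E = Set.univ \ E) ↔ E.ncard = n := by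
  classical
  have hVar : Nat.card (Var n n) = n + n := by
    simp [Nat.card_eq_fintype_card]
  have hcompl : E.ncard + Eᶜ.ncard = n + n := by
    rw [Set.ncard_add_ncard_compl, hVar]
  constructor
  · rintro ⟨ψ, hψ⟩
    have h1 : (ψ.varMap '' E).ncard = E.ncard :=
      Set.ncard_image_of_injective _ ψ.varMap.injective
    rw [hψ, ← Set.compl_eq_univ_diff] at h1
    omega
  · intro hE
    set sA : Set (Fin n) := Sum.inl ⁻¹' E with hsA
    set sB : Set (Fin n) := Sum.inr ⁻¹' E with hsB
    have hEdecomp : E = Sum.inl '' sA ∪ Sum.inr '' sB := by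
      ext (a | b) <;> simp [sA, sB]
    have hEcard : sA.ncard + sB.ncard = n := by
      rw [hEdecomp] at hE
      rw [Set.ncard_union_eq (by simp [Set.disjoint_left]) (Set.toFinite _) (Set.toFinite _),
        Set.ncard_image_of_injective _ Sum.inl_injective,
        Set.ncard_image_of_injective _ Sum.inr_injective] at hE
      exact hE
    have hA : sA.ncard + sAᶜ.ncard = n := by
      rw [Set.ncard_add_ncard_compl]; simp [Nat.card_eq_fintype_card]
    have hB : sB.ncard + sBᶜ.ncard = n := by
      rw [Set.ncard_add_ncard_compl]; simp [Nat.card_eq_fintype_card]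
    obtain ⟨σ, hσ⟩ := exists_perm_image sB sAᶜ (by omega)
    obtain ⟨τ, hτ⟩ := exists_perm_image sA sBᶜ (by omega)
    refine ⟨swapAut n σ τ, ?_⟩
    have himg : (swapAut n σ τ).varMap '' E
        = Sum.inr '' (τ '' sA) ∪ Sum.inl '' (σ '' sB) := by
      rw [hEdecomp, Set.image_union, ← Set.image_comp, ← Set.image_comp,
        ← Set.image_comp, ← Set.image_comp]
      rfl
    rw [himg, hσ, hτ]
    ext (a | b) <;> simp [sA, sB]
end

section
/- Let G be a finite bipartite Tanner graph with variable nodes V, check nodes C and adjacency relation Adj ⊆ V × C, let s : C → Bool be a syndrome labeling, let λ ∈ ℝ, let χ : Adj → K be an edge labeling with label set K, let (Φ^{(k)})_{k ∈ K} be a family of update functions Φ^{(k)} : ℝ → Multiset ℝ → ℝ, and let Ψ : Bool → Multiset ℝ → ℝ be a shared check update function. Define messages by the flooding recursion: ν⁰_{v→c} is a given initialization, and for ℓ ≥ 1, ν^ℓ_{v→c} = Φ^{(χ(v,c))}(λ, {μ^{ℓ-1}_{c'→v} : c' adjacent to v, c' ≠ c}) and μ^ℓ_{c→v} = Ψ(s(c),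 {ν^ℓ_{v'→c} : v' adjacent to c, v' ≠ v}), where the second arguments are multisets. Let ψ be a bijection of V ⊔ C with ψ(V) = V and ψ(C) = C that preserves adjacency, the syndrome labels (s(ψ(c)) = s(c)), and the edge labels (χ(ψ(v), ψ(c)) = χ(v,c)), and suppose the initialization is ψ-invariant: ν⁰_{ψ(v)→ψ(c)} = ν⁰_{v→c} for all adjacent (v,c). Then for every iteration ℓ ≥ 0 and every adjacent pair (v,c): ν^ℓ_{v→c} = ν^ℓ_{ψ(v)→ψ(c)} and μ^ℓ_{c→v} = μ^ℓ_{ψ(c)→ψ(v)}. -/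
lemma map_filter_equiv {α β : Type*} [Fintype α] [DecidableEq α] (e : α ≃ α)
    (P : α → Prop) [DecidablePred P] (f : α → β) :
    (Finset.univ.filter P).val.map f
      = (Finset.univ.filter (fun a => P (e a))).val.map (fun a => f (e a)) := by
  have h : Finset.univ.filter P
      = (Finset.univ.filter (fun a => P (e a))).map e.toEmbedding := by
    ext a
    simp [Finset.mem_map_equiv]
  rw [h, Finset.map_val, Multiset.map_map]
  rfl


/-- **Equivariance of edge-anisotropic syndrome-based flooding decoders.**
On a finite bipartite Tanner graph with an edge labeling `χ` (with label set
`K`), a family of permutation-invariant variable update rules `Φ k` selected by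
the edge label, and a shared permutation-invariant check update rule `Ψ`, any
bijection of `V ⊔ C` preserving the parts, the adjacency, the syndrome labels,
and the edge labels, under which the initialization is invariant, leaves the
whole message evolution equivariant. -/
theorem stmt16
    {V C K : Type*} [Fintype V] [Fintype C] [DecidableEq V] [DecidableEq C]
    (Adj : V → C → Prop) [∀ v c, Decidable (Adj v c)]
    (s : C → Bool) (lam : ℝ)
    (χ : V → C → K)  -- edge labeling (only its values on adjacent pairs matter)
    (Φ : K → ℝ → Multiset ℝ → ℝ) (Ψ : Bool → Multiset ℝ → ℝ)
    (ν : ℕ → V → C → ℝ) (μ : ℕ → C → V → ℝ)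
    -- label-dependent variable-to-check update (flooding schedule), for `ℓ ≥ 1`:
    (hν : ∀ ℓ v c, Adj v c →
      ν (ℓ + 1) v c =
        Φ (χ v c) lam ((Finset.univ.filter fun c' => Adj v c' ∧ c' ≠ c).val.map
          fun c' => μ ℓ c' v))
    -- shared check-to-variable update:
    (hμ : ∀ ℓ v c, Adj v c →
      μ ℓ c v =
        Ψ (s c) ((Finset.univ.filter fun v' => Adj v' c ∧ v' ≠ v).val.map
          fun v' => ν ℓ v' c))
    -- the symmetry `ψ`, given by its restrictions to `V` and to `C`:
    (ψV : V ≃ V) (ψC : C ≃ C)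
    (hadj : ∀ v c, Adj (ψV v) (ψC c) ↔ Adj v c)
    (hs : ∀ c, s (ψC c) = s c)
    (hχ : ∀ v c, Adj v c → χ (ψV v) (ψC c) = χ v c)
    -- `ψ`-invariance of the initialization:
    (hinit : ∀ v c, Adj v c → ν 0 (ψV v) (ψC c) = ν 0 v c) :
    ∀ ℓ v c, Adj v c →
      ν ℓ v c = ν ℓ (ψV v) (ψC c) ∧ μ ℓ c v = μ ℓ (ψC c) (ψV v) := by
  intro ℓ
  induction ℓ with
  | zero =>
    intro v c hvc
    have hνequiv : ∀ v c, Adj v c → ν 0 v c = ν 0 (ψV v) (ψC c) :=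
      fun v c h => (hinit v c h).symm
    refine ⟨hνequiv v c hvc, ?_⟩
    rw [hμ 0 v c hvc, hμ 0 (ψV v) (ψC c) ((hadj v c).mpr hvc), hs]
    conv_rhs => rw [map_filter_equiv ψV]
    congr 1
    refine Multiset.map_congr ?_ ?_
    · congr 1
      ext a
      simp [hadj, ψV.injective.eq_iff]
    · intro a ha
      simp only [Finset.mem_val, Finset.mem_filter] at ha
      exact hνequiv a c ((hadj a c).mp ha.2.1)
  | succ n ih =>
    intro v c hvc
    have hνequiv : ∀ v c, Adj v c → ν (n+1) v c = ν (n+1) (ψV v) (ψC c) := by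
      intro v c hvc
      rw [hν n v c hvc, hν n (ψV v) (ψC c) ((hadj v c).mpr hvc), hχ v c hvc]
      conv_rhs => rw [map_filter_equiv ψC]
      congr 1
      refine Multiset.map_congr ?_ ?_
      · congr 1
        ext a
        simp [hadj, ψC.injective.eq_iff]
      · intro a ha
        simp only [Finset.mem_val, Finset.mem_filter] at ha
        exact (ih v a ((hadj v a).mp ha.2.1)).2
    refine ⟨hνequiv v c hvc, ?_⟩
    rw [hμ (n+1) v c hvc, hμ (n+1) (ψV v) (ψC c) ((hadj v c).mpr hvc), hs]
    conv_rhs => rw [map_filter_equiv ψV]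
    congr 1
    refine Multiset.map_congr ?_ ?_
    · congr 1
      ext a
      simp [hadj, ψV.injective.eq_iff]
    · intro a ha
      simp only [Finset.mem_val, Finset.mem_filter] at ha
      exact hνequiv a c ((hadj a c).mp ha.2.1)
end
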